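/- Let k be a field, R a commutative finitely generated k-algebra, and M a finitely generated R-module. Then M is finite-dimensional as a k-vector space if and only if every prime ideal in the support of M is a maximal ideal of R. -/

import Mathlib

/-- Let `k` be a field, `R` a commutative finitely generated `k`-algebra, and `M` a finitely
generated `R`-module.  Then `M` is finite-dimensional as a `k`-vector space if and only if
every prime ideal in the support of `M` is a maximal ideal of `R`. -/
theorem finite_dimensional_iff_support_maximal
    (k : Type*) [Field k] (R : Type*) [CommRing R] [Algebra k R] [Algebra.FiniteType k R]
    (M : Type*) [AddCommGroup M] [Module R M] [Module k M] [IsScalarTower k R M]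
    [Module.Finite R M] :
    FiniteDimensional k M ↔ ∀ p ∈ Module.support R M, p.asIdeal.IsMaximal := by
  have hNR : IsNoetherianRing R := Algebra.FiniteType.isNoetherianRing k R
  constructor
  · intro hfd p hp
    rw [Module.mem_support_iff_of_finite] at hp
    set I := Module.annihilator R M with hI
    let φ : R →ₐ[k] Module.End k M := Algebra.lsmul k k M
    have hker : RingHom.ker (φ : R →+* Module.End k M) = I := by
      ext r
      simp only [RingHom.mem_ker, hI, Module.mem_annihilator]
      constructor
      · intro h m
        have := congrArg (fun (f : Module.End k M) => f m) h
        simpa [φ] using this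
      · intro h
        ext m
        simpa [φ] using h m
    let ψ : R ⧸ I →+* Module.End k M :=
      Ideal.Quotient.lift I (φ : R →+* Module.End k M)
        (fun a ha => by rwa [← RingHom.mem_ker, hker])
    have hinj : Function.Injective ψ := by
      refine (injective_iff_map_eq_zero ψ).mpr fun a ha => ?_
      obtain ⟨r, rfl⟩ := Ideal.Quotient.mk_surjective a
      rw [Ideal.Quotient.eq_zero_iff_mem, ← hker, RingHom.mem_ker]
      exact ha
    -- `ψ` is also `k`-linear
    let ψₗ : (R ⧸ I) →ₗ[k] Module.End k M :=
      { toFun := ψ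
        map_add' := by simp
        map_smul' := by
          intro c x
          obtain ⟨r, rfl⟩ := Ideal.Quotient.mk_surjective x
          have : c • (Ideal.Quotient.mk I) r = Ideal.Quotient.mk I (c • r) := rfl
          rw [this]
          show ψ (Ideal.Quotient.mk I (c • r)) = c • ψ (Ideal.Quotient.mk I r)
          have : ψ (Ideal.Quotient.mk I (c • r)) = φ (c • r) := rfl
          rw [this]
          show φ (c • r) = c • φ r
          simp }
    have hfd2 : FiniteDimensional k (R ⧸ I) :=
      FiniteDimensional.of_injective ψₗ hinj
    have hart : IsArtinianRing (R ⧸ I) := IsArtinianRing.of_finite k (R ⧸ I)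
    have hIker : RingHom.ker (Ideal.Quotient.mk I) = I := Ideal.mk_ker
    have hq : (p.asIdeal.map (Ideal.Quotient.mk I)).IsPrime :=
      Ideal.map_isPrime_of_surjective Ideal.Quotient.mk_surjective (by rw [hIker]; exact hp)
    have hqmax : (p.asIdeal.map (Ideal.Quotient.mk I)).IsMaximal :=
      IsArtinianRing.isMaximal_of_isPrime _
    have hcomap : (p.asIdeal.map (Ideal.Quotient.mk I)).comap (Ideal.Quotient.mk I) = p.asIdeal := by
      rw [Ideal.comap_map_of_surjective _ Ideal.Quotient.mk_surjective,
        ← RingHom.ker_eq_comap_bot, hIker]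
      exact sup_eq_left.mpr hp
    rw [← hcomap]
    exact Ideal.comap_isMaximal_of_surjective _ Ideal.Quotient.mk_surjective
  · intro H
    have hN : IsNoetherian R M := inferInstance
    obtain ⟨N, hN1, hN2⟩ := set_has_maximal_iff_noetherian.mpr hN
      {N : Submodule R M | FiniteDimensional k N}
      ⟨⊥, by
        show FiniteDimensional k (⊥ : Submodule R M)
        infer_instance⟩
    have htop : N = ⊤ := by
      by_contra hne
      have : Nontrivial (M ⧸ N) :=
        Submodule.Quotient.nontrivial_iff.mpr hne
      obtain ⟨p, hp, x, hx⟩ := (associatedPrimes.nonempty R (M ⧸ N)).imp fun _ h => isAssociatedPrime_iff.mp h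
      have hxne : x ≠ 0 := by
        rintro rfl
        exact hp.ne_top (by rw [hx]; ext r; simp [Submodule.mem_colon_singleton])
      have hpmem : (⟨p, hp⟩ : PrimeSpectrum R) ∈ Module.support R M := by
        rw [Module.mem_support_iff_of_finite]
        intro r hr
        show r ∈ p
        rw [hx, Submodule.mem_colon_singleton, Submodule.mem_bot]
        obtain ⟨m, rfl⟩ := Submodule.Quotient.mk_surjective N x
        have : r • m = 0 := Module.mem_annihilator.mp hr m
        rw [← Submodule.Quotient.mk_smul, this, Submodule.Quotient.mk_zero]
      have hpmax : p.IsMaximal := H _ hpmem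
      haveI := hpmax
      haveI : Algebra.FiniteType k (R ⧸ p) :=
        Algebra.FiniteType.of_surjective (Ideal.Quotient.mkₐ k p)
          (Ideal.Quotient.mkₐ_surjective k p)
      haveI : Module.Finite k (R ⧸ p) :=
        @finite_of_finite_type_of_isJacobsonRing k (R ⧸ p) _ (Ideal.Quotient.field p) _ _ _
      -- `R ⧸ p ≃ₗ[R] R ∙ x`
      let f := LinearMap.toSpanSingleton R (M ⧸ N) x
      have hkerf : LinearMap.ker f = p := by
        ext r
        rw [LinearMap.mem_ker, LinearMap.toSpanSingleton_apply, hx,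
          Submodule.mem_colon_singleton, Submodule.mem_bot]
      let e : (R ⧸ p) ≃ₗ[R] ↥(LinearMap.range f) :=
        (Submodule.quotEquivOfEq p (LinearMap.ker f) hkerf.symm).trans f.quotKerEquivRange
      have hrange : LinearMap.range f = (R ∙ x) :=
        (LinearMap.span_singleton_eq_range R (M ⧸ N) x).symm
      let e' : (R ⧸ p) ≃ₗ[R] ↥(R ∙ x) :=
        e.trans (LinearEquiv.ofEq _ _ hrange)
      haveI : Module.Finite k ↥(R ∙ x) := Module.Finite.equiv (e'.restrictScalars k)
      -- the preimage of `R ∙ x` in `M`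
      set N' : Submodule R M := Submodule.comap N.mkQ (R ∙ x) with hN'
      have hNle : N ≤ N' := by
        intro m hm
        show N.mkQ m ∈ (R ∙ x)
        rw [show N.mkQ m = 0 from (Submodule.Quotient.mk_eq_zero _).mpr hm]
        exact Submodule.zero_mem _
      have hlt : N < N' := by
        obtain ⟨m, hm⟩ := Submodule.Quotient.mk_surjective N x
        refine lt_of_le_of_ne hNle fun h => ?_
        have hm' : m ∈ N' := by
          show N.mkQ m ∈ (R ∙ x)
          rw [show N.mkQ m = x from hm]
          exact Submodule.mem_span_singleton_self x
        rw [← h] at hm'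
        exact hxne (by rw [← hm]; exact (Submodule.Quotient.mk_eq_zero _).mpr hm')
      -- `N'` is finite dimensional: extension of `R ∙ x` by `N`
      let ι : ↥N →ₗ[R] ↥N' := Submodule.inclusion hNle
      let g : ↥N' →ₗ[R] ↥(R ∙ x) :=
        LinearMap.codRestrict (R ∙ x) (N.mkQ.comp N'.subtype) (fun y => y.2)
      have hexact : LinearMap.range (ι.restrictScalars k) = LinearMap.ker (g.restrictScalars k) := by
        ext y
        simp only [LinearMap.mem_range, LinearMap.mem_ker, LinearMap.restrictScalars_apply]
        constructor
        · rintro ⟨z, rfl⟩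
          apply Subtype.ext
          show N.mkQ ((ι z : M)) = 0
          exact (Submodule.Quotient.mk_eq_zero _).mpr z.2
        · intro hy
          have h0 : N.mkQ (y : M) = 0 := congrArg Subtype.val hy
          have : (y : M) ∈ N := (Submodule.Quotient.mk_eq_zero _).mp h0
          exact ⟨⟨(y : M), this⟩, Subtype.ext rfl⟩
      haveI : IsNoetherian k ↥N := IsNoetherian.iff_fg.mpr hN1
      haveI : IsNoetherian k ↥(R ∙ x) := IsNoetherian.iff_fg.mpr inferInstance
      have hno : IsNoetherian k ↥N' :=
        isNoetherian_of_range_eq_ker (ι.restrictScalars k) (g.restrictScalars k) hexact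
      have : FiniteDimensional k ↥N' := IsNoetherian.iff_fg.mp hno
      exact hN2 N' this hlt
    subst htop
    have : FiniteDimensional k ↥(⊤ : Submodule R M) := hN1
    exact Module.Finite.equiv ((Submodule.topEquiv (R := R) (M := M)).restrictScalars k)
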